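/- Every implicational propositional formula is classically equivalent to an implicational formula of order at most three. -/
import Mathlib


set_option autoImplicit true

namespace IPCStmt15

/-- Implicational formulas (simple types). -/
inductive ITy : Type
  | var : ℕ → ITy
  | imp : ITy → ITy → ITy
  deriving DecidableEq

/-- `impList [σ₁, …, σₙ] τ = σ₁ → ⋯ → σₙ → τ`. -/
def impList : List ITy → ITy → ITy
  | [], τ => τ
  | σ :: σs, τ => .imp σ (impList σs τ)

/-- The order of an implicational formula: `r(atom) = 0` and
`r(σ → τ) = max (r σ + 1) (r τ)`, i.e. `r(σ₁→⋯→σₖ→p) = 1 + maxᵢ r(σᵢ)`. -/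
def order : ITy → ℕ
  | .var _ => 0
  | .imp σ τ => max (order σ + 1) (order τ)

/-- Intuitionistic natural deduction for the implicational fragment (IIPC):
the rules (var), (→I), (→E). -/
inductive IDeriv : List ITy → ITy → Prop
  | ax {Γ φ} : φ ∈ Γ → IDeriv Γ φ
  | impI {Γ φ ψ} : IDeriv (φ :: Γ) ψ → IDeriv Γ (.imp φ ψ)
  | impE {Γ φ ψ} : IDeriv Γ (.imp φ ψ) → IDeriv Γ φ → IDeriv Γ ψ

/-- Classical (Boolean) evaluation of an implicational formula under a valuation. -/
def evalI (v : ℕ → Bool) : ITy → Bool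
  | .var p => v p
  | .imp σ τ => !evalI v σ || evalI v τ


def vars : ITy → Finset ℕ
  | .var n => {n}
  | .imp a b => vars a ∪ vars b

def target : ITy → ℕ
  | .var n => n
  | .imp _ b => target b

lemma eval_congr (σ : ITy) {v w : ℕ → Bool} (h : ∀ n ∈ vars σ, v n = w n) :
    evalI v σ = evalI w σ := by
  induction σ with
  | var n => exact h n (by simp [vars])
  | imp a b iha ihb =>
      simp only [evalI]
      rw [iha (fun n hn => h n (by simp [vars, hn])),
          ihb (fun n hn => h n (by simp [vars, hn]))]

lemma eval_false_target (σ : ITy) (v : ℕ → Bool) (h : evalI v σ = false) :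
    v (target σ) = false := by
  induction σ with
  | var n => exact h
  | imp a b iha ihb =>
      simp only [evalI, Bool.or_eq_false_iff] at h
      exact ihb h.2

lemma eval_impList (v : ℕ → Bool) (L : List ITy) (q : ITy) :
    evalI v (impList L q) = (L.any (fun G => !evalI v G) || evalI v q) := by
  induction L with
  | nil => simp [impList]
  | cons a L ih => simp [impList, evalI, ih, Bool.or_assoc]

lemma order_impList (L : List ITy) (q : ITy) (n : ℕ) (hL : ∀ G ∈ L, order G ≤ n)
    (hq : order q ≤ n + 1) : order (impList L q) ≤ n + 1 := by
  induction L with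
  | nil => simpa [impList]
  | cons a L ih =>
      simp only [impList, order, max_le_iff]
      exact ⟨by have := hL a (by simp); omega,
        ih (fun G hG => hL G (by simp [hG]))⟩

lemma any_map' {α β} (l : List α) (f : α → β) (p : β → Bool) :
    (l.map f).any p = l.any fun a => p (f a) := by
  induction l with
  | nil => rfl
  | cons a l ih => simp [List.any, ih]

/-- every implicational propositional formula is classically
equivalent to an implicational formula of order at most three. -/
theorem classical_order_three_normal_form (σ : ITy) :
    ∃ τ : ITy, order τ ≤ 3 ∧ ∀ v : ℕ → Bool, evalI v σ = evalI v τ := by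
  classical
  set V := vars σ with hV
  set p := target σ with hp
  let vT : Finset ℕ → (ℕ → Bool) := fun T n => decide (n ∈ T)
  let S : Finset (Finset ℕ) :=
    V.powerset.filter (fun T => evalI (vT T) σ = true ∧ p ∉ T)
  let G : Finset ℕ → ITy := fun T =>
    impList (T.toList.map .var ++ (V \ T).toList.map (fun y => .imp (.var y) (.var p)))
      (.var p)
  refine ⟨impList (S.toList.map G) (.var p), ?_, ?_⟩
  · apply order_impList _ _ 2
    · intro g hg
      simp only [List.mem_map] at hg
      obtain ⟨T, _, rfl⟩ := hg
      apply order_impList _ _ 1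
      · intro g hg
        simp only [List.mem_append, List.mem_map] at hg
        rcases hg with ⟨x, _, rfl⟩ | ⟨x, _, rfl⟩
        · simp [order]
        · simp [order]
      · simp [order]
    · simp [order]
  · intro v
    rw [eval_impList]
    cases hvp : v p with
    | true =>
        have hσ : evalI v σ = true := by
          cases hσ : evalI v σ with
          | true => rfl
          | false =>
              have := eval_false_target σ v hσ
              rw [← hp] at this
              rw [this] at hvp
              exact absurd hvp (by simp)
        simp [hσ, evalI, hvp]
    | false =>
        have hGval : ∀ T, (!evalI v (G T)) =
            ((!(T.toList.any fun x => !v x)) && (!((V \ T).toList.any fun x => v x))) := by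
          intro T
          simp only [G, eval_impList, evalI, List.any_append, any_map', hvp,
            Bool.or_false, Bool.not_or, Bool.not_not]
        have key : ∀ T ∈ S, ((!evalI v (G T)) = true ↔ T = V.filter (fun n => v n)) := by
          intro T hT
          have hTV : T ⊆ V := by
            simp only [S, Finset.mem_filter, Finset.mem_powerset] at hT
            exact hT.1
          rw [hGval T]
          simp only [Bool.and_eq_true, Bool.not_eq_true', List.any_eq_false,
            Bool.not_eq_true, Bool.not_eq_false, Finset.mem_toList]
          constructor
          · rintro ⟨h1, h2⟩
            ext n
            simp only [Finset.mem_filter]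
            constructor
            · intro hn; exact ⟨hTV hn, h1 n hn⟩
            · rintro ⟨hnV, hnv⟩
              by_contra hn
              have := h2 n (Finset.mem_sdiff.mpr ⟨hnV, hn⟩)
              rw [hnv] at this
              exact absurd this (by simp)
          · rintro rfl
            refine ⟨fun t ht => (Finset.mem_filter.mp ht).2, fun y hy => ?_⟩
            have h := Finset.mem_sdiff.mp hy
            have h2 : ¬ (v y = true) := fun hh => h.2 (Finset.mem_filter.mpr ⟨h.1, hh⟩)
            simp [Bool.eq_false_iff.mpr h2]
        have heq : evalI (vT (V.filter (fun n => v n))) σ = evalI v σ := by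
          apply eval_congr
          intro n hn
          rw [← hV] at hn
          simp [vT, Finset.mem_filter, hn]
        have hmem : (V.filter (fun n => v n) ∈ S) ↔ evalI v σ = true := by
          simp only [S, Finset.mem_filter, Finset.mem_powerset]
          rw [heq]
          simp [Finset.filter_subset, Finset.mem_filter, hvp]
        simp only [evalI, hvp, Bool.or_false]
        rw [Bool.eq_iff_iff]
        rw [any_map']
        simp only [List.any_eq_true, Finset.mem_toList]
        constructor
        · intro h
          exact ⟨_, hmem.mpr h, (key _ (hmem.mpr h)).mpr rfl⟩
        · rintro ⟨T, hT, hG⟩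
          have hTe := (key T hT).mp hG
          rw [hTe] at hT
          exact hmem.mp hT

end IPCStmt15
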